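/- With the notation of the twisted representation and the operator T as above (char F = 0, 1 ≤ n₁ < n₂ ≤ n), T commutes with π(E_{i,j}) for all i, j ∈ {1,...,n} with i, j ≠ n₁+1: T ∘ π(E_{i,j}) = π(E_{i,j}) ∘ T as operators on A. -/

import Mathlib

open MvPolynomial

set_option linter.unusedSectionVars false
set_option maxHeartbeats 1000000

namespace Stmt6

variable (F : Type*) [Field F] [CharZero F] (n n₁ n₂ : ℕ)

abbrev A := MvPolynomial (Fin n ⊕ Fin n) F

noncomputable def xv (i : Fin n) : A F n := X (Sum.inl i)
noncomputable def yv (i : Fin n) : A F n := X (Sum.inr i)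
noncomputable def mul (f : A F n) : Module.End F (A F n) := LinearMap.mulLeft F f
noncomputable def pdx (i : Fin n) : Module.End F (A F n) :=
  (pderiv (Sum.inl i : Fin n ⊕ Fin n)).toLinearMap
noncomputable def pdy (i : Fin n) : Module.End F (A F n) :=
  (pderiv (Sum.inr i : Fin n ⊕ Fin n)).toLinearMap

/-- `E^x_{i,j}`. -/
noncomputable def Ex (i j : Fin n) : Module.End F (A F n) :=
  if (i : ℕ) < n₁ then
    (if (j : ℕ) < n₁ then
      -(mul F n (xv F n j) * pdx F n i) - (if i = j then 1 else 0)
    else pdx F n i * pdx F n j)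
  else
    (if (j : ℕ) < n₁ then -(mul F n (xv F n i * xv F n j))
    else mul F n (xv F n i) * pdx F n j)

/-- `E^y_{i,j}`. -/
noncomputable def Ey (i j : Fin n) : Module.End F (A F n) :=
  if (i : ℕ) < n₂ then
    (if (j : ℕ) < n₂ then mul F n (yv F n i) * pdy F n j
    else -(mul F n (yv F n i * yv F n j)))
  else
    (if (j : ℕ) < n₂ then pdy F n i * pdy F n j
    else -(mul F n (yv F n j) * pdy F n i) - (if i = j then 1 else 0))

/-- The twisted oscillator representation `π(E_{i,j}) = E^x_{i,j} − E^y_{j,i}`. -/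
noncomputable def π (i j : Fin n) : Module.End F (A F n) :=
  Ex F n n₁ i j - Ey F n n₂ j i

/-- The twisted Laplace operator. -/
noncomputable def lap : Module.End F (A F n) :=
  (∑ i ∈ Finset.univ.filter (fun i : Fin n => (i : ℕ) < n₁),
      mul F n (xv F n i) * pdy F n i)
  - (∑ r ∈ Finset.univ.filter (fun r : Fin n => n₁ ≤ (r : ℕ) ∧ (r : ℕ) < n₂),
      pdx F n r * pdy F n r)
  + ∑ s ∈ Finset.univ.filter (fun s : Fin n => n₂ ≤ (s : ℕ)),
      mul F n (yv F n s) * pdx F n s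

/-- The operator `T` on a monomial with exponent vector `d` (the `x`-exponents are
`d (Sum.inl ·)` and the `y`-exponents are `d (Sum.inr ·)`); the defining series is
finite, all terms beyond the total degree being zero. -/
noncomputable def Tmono (hn : n₁ < n) (d : (Fin n ⊕ Fin n) →₀ ℕ) : A F n :=
  ∑ i ∈ Finset.range (d.sum (fun _ e => e) + 1),
    ((∏ r ∈ Finset.range i,
        ((d (Sum.inl ⟨n₁, hn⟩) + r + 1) * (d (Sum.inr ⟨n₁, hn⟩) + r + 1)) : ℕ) : F)⁻¹ •
      ((xv F n ⟨n₁, hn⟩ * yv F n ⟨n₁, hn⟩) ^ i *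
        (((lap F n n₁ n₂ + pdx F n ⟨n₁, hn⟩ * pdy F n ⟨n₁, hn⟩) ^ i)
          (monomial d (1 : F))))

/-- The linear extension of `T` to all polynomials. -/
noncomputable def Tfun (hn : n₁ < n) (p : A F n) : A F n :=
  ∑ d ∈ p.support, (coeff d p) • Tmono F n n₁ n₂ hn d


noncomputable def Dm (u : Fin n ⊕ Fin n) : Module.End F (A F n) := (pderiv u).toLinearMap
noncomputable def Xm (u : Fin n ⊕ Fin n) : Module.End F (A F n) := LinearMap.mulLeft F (X u)

lemma end_ext {φ ψ : Module.End F (A F n)}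
    (h : ∀ d : (Fin n ⊕ Fin n) →₀ ℕ, φ (monomial d 1) = ψ (monomial d 1)) : φ = ψ := by
  apply LinearMap.ext; intro p
  induction p using MvPolynomial.induction_on' with
  | monomial d a =>
    rw [show (monomial d a : A F n) = a • monomial d 1 by rw [smul_monomial, smul_eq_mul, mul_one],
      map_smul, map_smul, h]
  | add p q hp hq => rw [map_add, map_add, hp, hq]

lemma Dm_mul_Xm (u v : Fin n ⊕ Fin n) :
    Dm F n u * Xm F n v = Xm F n v * Dm F n u + if u = v then 1 else 0 := by
  apply LinearMap.ext; intro p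
  by_cases h : u = v <;>
    simp [Dm, Xm, Module.End.mul_apply, pderiv_mul, h, add_comm]

lemma commute_Xm_Xm (u v : Fin n ⊕ Fin n) : Commute (Xm F n u) (Xm F n v) := by
  apply LinearMap.ext; intro p
  simp [Xm, Module.End.mul_apply, mul_left_comm]

lemma commute_Dm_Dm (u v : Fin n ⊕ Fin n) : Commute (Dm F n u) (Dm F n v) := by
  rcases eq_or_ne u v with rfl | huv
  · rfl
  apply end_ext; intro d
  show (pderiv u) ((pderiv v) (monomial d 1)) = (pderiv v) ((pderiv u) (monomial d 1))
  rw [pderiv_monomial, pderiv_monomial, pderiv_monomial, pderiv_monomial]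
  rw [Finsupp.tsub_apply, Finsupp.tsub_apply, Finsupp.single_eq_of_ne huv,
    Finsupp.single_eq_of_ne (Ne.symm huv), tsub_zero, tsub_zero, tsub_tsub, tsub_tsub, add_comm]
  ring_nf

lemma commute_Dm_Xm {u v : Fin n ⊕ Fin n} (h : u ≠ v) : Commute (Dm F n u) (Xm F n v) := by
  unfold Commute SemiconjBy
  rw [Dm_mul_Xm, if_neg h, add_zero]



/-- weight -/
def wt (u : Fin n ⊕ Fin n) : ℕ :=
  Sum.elim (fun a : Fin n => if n₂ ≤ (a : ℕ) then 1 else 0)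
    (fun a : Fin n => if (a : ℕ) < n₂ then 1 else 0) u

def wsum (d : (Fin n ⊕ Fin n) →₀ ℕ) : ℕ := d.sum fun u e => wt n n₂ u * e

def deg (d : (Fin n ⊕ Fin n) →₀ ℕ) : ℕ := d.sum fun _ e => e

lemma wt_le_one (u : Fin n ⊕ Fin n) : wt n n₂ u ≤ 1 := by
  rcases u with a | a <;> simp [wt] <;> split <;> simp

lemma wsum_add (c e : (Fin n ⊕ Fin n) →₀ ℕ) :
    wsum n n₂ (c + e) = wsum n n₂ c + wsum n n₂ e :=
  Finsupp.sum_add_index' (fun _ => by simp) (fun _ b₁ b₂ => by ring)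

lemma deg_add (c e : (Fin n ⊕ Fin n) →₀ ℕ) : deg n (c + e) = deg n c + deg n e :=
  Finsupp.sum_add_index' (fun _ => rfl) (fun _ _ _ => rfl)

lemma wsum_single (u : Fin n ⊕ Fin n) (e : ℕ) :
    wsum n n₂ (Finsupp.single u e) = wt n n₂ u * e :=
  Finsupp.sum_single_index (by simp)

lemma deg_single (u : Fin n ⊕ Fin n) (e : ℕ) : deg n (Finsupp.single u e) = e :=
  Finsupp.sum_single_index rfl

lemma wsum_le_deg (d : (Fin n ⊕ Fin n) →₀ ℕ) : wsum n n₂ d ≤ deg n d :=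
  Finset.sum_le_sum fun u _ => le_trans
    (Nat.mul_le_mul_right _ (wt_le_one n n₂ u)) (by simp)

lemma coeff_pderiv (v : Fin n ⊕ Fin n) (p : A F n) (d' : (Fin n ⊕ Fin n) →₀ ℕ) :
    coeff d' (pderiv v p) =
      coeff (d' + Finsupp.single v 1) p * ((d' v : F) + 1) := by
  induction p using MvPolynomial.induction_on' with
  | add p q hp hq => rw [map_add, coeff_add, coeff_add, hp, hq, add_mul]
  | monomial d a =>
    rw [pderiv_monomial, coeff_monomial, coeff_monomial]
    by_cases h : d = d' + Finsupp.single v 1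
    · rw [if_pos h, if_pos]
      · subst h
        rw [Finsupp.add_apply, Finsupp.single_eq_same]
        push_cast; ring
      · subst h; ext w
        by_cases hw : w = v <;> simp [hw]
    · rw [if_neg h]
      by_cases h2 : d - Finsupp.single v 1 = d'
      · have hdv : d v = 0 := by
          by_contra hdv
          apply h; ext w
          by_cases hw : w = v
          · subst hw
            have : d' w = d w - 1 := by rw [← h2]; simp
            simp [this]; omega
          · have : d' w = d w := by rw [← h2]; simp [Finsupp.single_eq_of_ne' (Ne.symm hw)]
            simp [this, Finsupp.single_eq_of_ne' (Ne.symm hw)]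
        rw [if_pos h2, hdv]; push_cast; ring
      · rw [if_neg h2, zero_mul]

lemma mem_support_pderiv {v : Fin n ⊕ Fin n} {p : A F n} {d' : (Fin n ⊕ Fin n) →₀ ℕ}
    (h : d' ∈ (pderiv v p).support) : d' + Finsupp.single v 1 ∈ p.support := by
  rw [mem_support_iff] at h ⊢
  rw [coeff_pderiv] at h
  intro h0; rw [h0, zero_mul] at h; exact h rfl

lemma mem_support_X_mul {u : Fin n ⊕ Fin n} {p : A F n} {d' : (Fin n ⊕ Fin n) →₀ ℕ}
    (h : d' ∈ (X u * p).support) : ∃ d ∈ p.support, d' = Finsupp.single u 1 + d := by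
  rw [support_X_mul, Finset.mem_map] at h
  obtain ⟨d, hd, hde⟩ := h
  exact ⟨d, hd, by rw [← hde]; rfl⟩

lemma wsum_X_mul_pderiv {u v : Fin n ⊕ Fin n} (m' : ℕ) {p : A F n}
    (hp : ∀ d ∈ p.support, wsum n n₂ d ≤ m') :
    ∀ d' ∈ (X u * pderiv v p).support, wsum n n₂ d' + wt n n₂ v ≤ m' + wt n n₂ u := by
  intro d' hd'
  obtain ⟨e, he, rfl⟩ := mem_support_X_mul F n hd'
  have h2 := hp _ (mem_support_pderiv F n he)
  simp only [wsum_add, wsum_single] at h2 ⊢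
  omega

lemma wsum_pderiv_pderiv {u v : Fin n ⊕ Fin n} (m' : ℕ) {p : A F n}
    (hp : ∀ d ∈ p.support, wsum n n₂ d ≤ m') :
    ∀ d' ∈ (pderiv u (pderiv v p)).support,
      wsum n n₂ d' + wt n n₂ u + wt n n₂ v ≤ m' := by
  intro d' hd'
  have h1 := mem_support_pderiv F n hd'
  have h2 := hp _ (mem_support_pderiv F n h1)
  simp only [wsum_add, wsum_single] at h2
  omega



lemma coeff_XD_zero (m : ℕ) (p : A F n) (hp : ∀ d ∈ p.support, wsum n n₂ d ≤ m)
    (d' : (Fin n ⊕ Fin n) →₀ ℕ) (hcon : ¬ (wsum n n₂ d' + 1 ≤ m))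
    (u v : Fin n ⊕ Fin n) (hu : wt n n₂ u = 0) (hv : wt n n₂ v = 1) :
    coeff d' (X u * pderiv v p) = 0 := by
  rw [← notMem_support_iff]
  intro hmem
  have := wsum_X_mul_pderiv F n n₂ m hp d' hmem
  omega

lemma coeff_DD_zero (m : ℕ) (p : A F n) (hp : ∀ d ∈ p.support, wsum n n₂ d ≤ m)
    (d' : (Fin n ⊕ Fin n) →₀ ℕ) (hcon : ¬ (wsum n n₂ d' + 1 ≤ m))
    (u v : Fin n ⊕ Fin n) (huv : wt n n₂ u + wt n n₂ v = 1) :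
    coeff d' (pderiv u (pderiv v p)) = 0 := by
  rw [← notMem_support_iff]
  intro hmem
  have := wsum_pderiv_pderiv F n n₂ m hp d' hmem
  omega

lemma step_lemma (h₁₂ : n₁ < n₂) (hn : n₁ < n) (m : ℕ) (p : A F n)
    (hp : ∀ d ∈ p.support, wsum n n₂ d ≤ m) :
    ∀ d' ∈ ((lap F n n₁ n₂ + pdx F n ⟨n₁, hn⟩ * pdy F n ⟨n₁, hn⟩) p).support,
      wsum n n₂ d' + 1 ≤ m := by
  intro d' hd'
  by_contra hcon
  rw [mem_support_iff] at hd'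
  apply hd'
  simp only [lap, LinearMap.add_apply, LinearMap.sub_apply, LinearMap.sum_apply,
    Module.End.mul_apply, coeff_add, coeff_sub, coeff_sum, mul, xv, yv, pdx, pdy,
    LinearMap.mulLeft_apply, LinearMap.coe_coe]
  rw [Finset.sum_eq_zero, Finset.sum_eq_zero, Finset.sum_eq_zero]
  · simpa using coeff_DD_zero F n n₂ m p hp d' hcon
      (Sum.inl (⟨n₁, hn⟩ : Fin n)) (Sum.inr (⟨n₁, hn⟩ : Fin n))
      (by simp only [wt, Sum.elim_inl, Sum.elim_inr]
          rw [if_neg (by omega), if_pos (by omega)])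
  · intro s hs
    rw [Finset.mem_filter] at hs
    exact coeff_XD_zero F n n₂ m p hp d' hcon _ _
      (by simp only [wt, Sum.elim_inr]; rw [if_neg (by omega)])
      (by simp only [wt, Sum.elim_inl]; rw [if_pos (by omega)])
  · intro r hr
    rw [Finset.mem_filter] at hr
    exact coeff_DD_zero F n n₂ m p hp d' hcon _ _
      (by simp only [wt, Sum.elim_inl, Sum.elim_inr]
          rw [if_neg (by omega), if_pos (by omega)])
  · intro a ha
    rw [Finset.mem_filter] at ha
    exact coeff_XD_zero F n n₂ m p hp d' hcon _ _
      (by simp only [wt, Sum.elim_inl]; rw [if_neg (by omega)])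
      (by simp only [wt, Sum.elim_inr]; rw [if_pos (by omega)])

lemma Lpow_succ_zero (h₁₂ : n₁ < n₂) (hn : n₁ < n) (m : ℕ) (p : A F n)
    (hp : ∀ d ∈ p.support, wsum n n₂ d ≤ m) :
    ((lap F n n₁ n₂ + pdx F n ⟨n₁, hn⟩ * pdy F n ⟨n₁, hn⟩) ^ (m + 1)) p = 0 := by
  induction m generalizing p with
  | zero =>
    rw [pow_one, ← support_eq_empty]
    apply Finset.eq_empty_of_forall_notMem
    intro d' hd'
    have := step_lemma F n n₁ n₂ h₁₂ hn 0 p hp d' hd'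
    omega
  | succ m ih =>
    rw [pow_succ, Module.End.mul_apply]
    apply ih
    intro d' hd'
    have := step_lemma F n n₁ n₂ h₁₂ hn (m + 1) p hp d' hd'
    omega

lemma Lpow_zero_of_lt (h₁₂ : n₁ < n₂) (hn : n₁ < n) (m i : ℕ) (hmi : m < i) (p : A F n)
    (hp : ∀ d ∈ p.support, wsum n n₂ d ≤ m) :
    ((lap F n n₁ n₂ + pdx F n ⟨n₁, hn⟩ * pdy F n ⟨n₁, hn⟩) ^ i) p = 0 := by
  have h : i = (i - (m + 1)) + (m + 1) := by omega
  rw [h, pow_add, Module.End.mul_apply,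
    Lpow_succ_zero F n n₁ n₂ h₁₂ hn m p hp, map_zero]



def Ok (k : Fin n) (a b N : ℕ) (q : A F n) : Prop :=
  ∀ d' ∈ q.support, d' (Sum.inl k) = a ∧ d' (Sum.inr k) = b ∧ deg n d' ≤ N

lemma Ok_mono {k : Fin n} {a b N N' : ℕ} (h : N ≤ N') {q : A F n}
    (hq : Ok F n k a b N q) : Ok F n k a b N' q := fun d' hd' =>
  ⟨(hq d' hd').1, (hq d' hd').2.1, le_trans (hq d' hd').2.2 h⟩

lemma Ok_monomial (k : Fin n) (d : (Fin n ⊕ Fin n) →₀ ℕ) :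
    Ok F n k (d (Sum.inl k)) (d (Sum.inr k)) (deg n d) (monomial d (1 : F)) := by
  classical
  intro d' hd'
  rw [support_monomial, if_neg one_ne_zero, Finset.mem_singleton] at hd'
  subst hd'; exact ⟨rfl, rfl, le_rfl⟩

lemma Ok_zero (k : Fin n) (a b N : ℕ) : Ok F n k a b N (0 : A F n) := by
  intro d' hd'; simp at hd'

lemma Ok_neg {k : Fin n} {a b N : ℕ} {q : A F n} (hq : Ok F n k a b N q) :
    Ok F n k a b N (-q) := by
  intro d' hd'
  rw [mem_support_iff, coeff_neg, neg_ne_zero, ← mem_support_iff] at hd'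
  exact hq d' hd'

lemma Ok_sub {k : Fin n} {a b N : ℕ} {q q' : A F n} (hq : Ok F n k a b N q)
    (hq' : Ok F n k a b N q') : Ok F n k a b N (q - q') := by
  intro d' hd'
  rw [mem_support_iff, coeff_sub] at hd'
  by_cases h : coeff d' q = 0
  · rw [h, zero_sub, neg_ne_zero, ← mem_support_iff] at hd'
    exact hq' d' hd'
  · exact hq d' (mem_support_iff.mpr h)

lemma Ok_X_mul {k : Fin n} {a b N : ℕ} {u : Fin n ⊕ Fin n} {q : A F n}
    (hu1 : u ≠ Sum.inl k) (hu2 : u ≠ Sum.inr k) (hq : Ok F n k a b N q) :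
    Ok F n k a b (N + 1) (X u * q) := by
  intro d' hd'
  obtain ⟨e, he, rfl⟩ := mem_support_X_mul F n hd'
  obtain ⟨h1, h2, h3⟩ := hq e he
  refine ⟨?_, ?_, ?_⟩
  · rw [Finsupp.add_apply, Finsupp.single_eq_of_ne' hu1, zero_add]; exact h1
  · rw [Finsupp.add_apply, Finsupp.single_eq_of_ne' hu2, zero_add]; exact h2
  · rw [deg_add, deg_single]; omega

lemma Ok_pderiv {k : Fin n} {a b N : ℕ} {v : Fin n ⊕ Fin n} {q : A F n}
    (hv1 : v ≠ Sum.inl k) (hv2 : v ≠ Sum.inr k) (hq : Ok F n k a b N q) :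
    Ok F n k a b N (pderiv v q) := by
  intro d' hd'
  obtain ⟨h1, h2, h3⟩ := hq _ (mem_support_pderiv F n hd')
  rw [Finsupp.add_apply, Finsupp.single_eq_of_ne' hv1, add_zero] at h1
  rw [Finsupp.add_apply, Finsupp.single_eq_of_ne' hv2, add_zero] at h2
  rw [deg_add, deg_single] at h3
  exact ⟨h1, h2, by omega⟩

lemma Ok_pi (hn : n₁ < n) (i j : Fin n) (hi : (i : ℕ) ≠ n₁) (hj : (j : ℕ) ≠ n₁)
    (d : (Fin n ⊕ Fin n) →₀ ℕ) :
    Ok F n ⟨n₁, hn⟩ (d (Sum.inl ⟨n₁, hn⟩)) (d (Sum.inr ⟨n₁, hn⟩)) (deg n d + 2)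
      (π F n n₁ n₂ i j (monomial d (1 : F))) := by
  set k : Fin n := ⟨n₁, hn⟩ with hk
  have hik : i ≠ k := fun h => hi (by rw [h])
  have hjk : j ≠ k := fun h => hj (by rw [h])
  have hxi : (Sum.inl i : Fin n ⊕ Fin n) ≠ Sum.inl k := fun h => hik (Sum.inl.inj h)
  have hxj : (Sum.inl j : Fin n ⊕ Fin n) ≠ Sum.inl k := fun h => hjk (Sum.inl.inj h)
  have hyi : (Sum.inr i : Fin n ⊕ Fin n) ≠ Sum.inr k := fun h => hik (Sum.inr.inj h)
  have hyj : (Sum.inr j : Fin n ⊕ Fin n) ≠ Sum.inr k := fun h => hjk (Sum.inr.inj h)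
  have hM := Ok_monomial F n k d
  have hOk1 : Ok F n k (d (Sum.inl k)) (d (Sum.inr k)) (deg n d + 2)
      (Ex F n n₁ i j (monomial d (1 : F))) := by
    rw [Ex]
    by_cases h1 : (i : ℕ) < n₁ <;> by_cases h2 : (j : ℕ) < n₁
    · rw [if_pos h1, if_pos h2]
      by_cases hij : i = j
      · rw [if_pos hij]
        have e : ((-(mul F n (xv F n j) * pdx F n i) - (1 : Module.End F (A F n)))
              (monomial d (1 : F)) : A F n) =
            -(X (Sum.inl j) * pderiv (Sum.inl i) (monomial d (1 : F))) -
              monomial d (1 : F) := rfl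
        rw [e]
        exact Ok_sub F n (Ok_neg F n (Ok_mono F n (by omega)
          (Ok_X_mul F n hxj (by simp) (Ok_pderiv F n hxi (by simp) hM))))
          (Ok_mono F n (by omega) hM)
      · rw [if_neg hij]
        have e : ((-(mul F n (xv F n j) * pdx F n i) - (0 : Module.End F (A F n)))
              (monomial d (1 : F)) : A F n) =
            -(X (Sum.inl j) * pderiv (Sum.inl i) (monomial d (1 : F))) - 0 := rfl
        rw [e, sub_zero]
        exact Ok_neg F n (Ok_mono F n (by omega)
          (Ok_X_mul F n hxj (by simp) (Ok_pderiv F n hxi (by simp) hM)))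
    · rw [if_pos h1, if_neg h2]
      have e : ((pdx F n i * pdx F n j) (monomial d (1 : F)) : A F n) =
          pderiv (Sum.inl i) (pderiv (Sum.inl j) (monomial d (1 : F))) := rfl
      rw [e]
      exact Ok_mono F n (by omega)
        (Ok_pderiv F n hxi (by simp) (Ok_pderiv F n hxj (by simp) hM))
    · rw [if_neg h1, if_pos h2]
      have e : ((-(mul F n (xv F n i * xv F n j))) (monomial d (1 : F)) : A F n) =
          -(X (Sum.inl i) * X (Sum.inl j) * monomial d (1 : F)) := rfl
      rw [e, mul_assoc]
      exact Ok_neg F n (Ok_X_mul F n hxi (by simp)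
        (Ok_X_mul F n hxj (by simp) (Ok_mono F n (by omega) hM)))
    · rw [if_neg h1, if_neg h2]
      have e : ((mul F n (xv F n i) * pdx F n j) (monomial d (1 : F)) : A F n) =
          X (Sum.inl i) * pderiv (Sum.inl j) (monomial d (1 : F)) := rfl
      rw [e]
      exact Ok_mono F n (by omega)
        (Ok_X_mul F n hxi (by simp) (Ok_pderiv F n hxj (by simp) hM))
  have hOk2 : Ok F n k (d (Sum.inl k)) (d (Sum.inr k)) (deg n d + 2)
      (Ey F n n₂ j i (monomial d (1 : F))) := by
    rw [Ey]
    by_cases h1 : (j : ℕ) < n₂ <;> by_cases h2 : (i : ℕ) < n₂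
    · rw [if_pos h1, if_pos h2]
      have e : ((mul F n (yv F n j) * pdy F n i) (monomial d (1 : F)) : A F n) =
          X (Sum.inr j) * pderiv (Sum.inr i) (monomial d (1 : F)) := rfl
      rw [e]
      exact Ok_mono F n (by omega)
        (Ok_X_mul F n (by simp) hyj (Ok_pderiv F n (by simp) hyi hM))
    · rw [if_pos h1, if_neg h2]
      have e : ((-(mul F n (yv F n j * yv F n i))) (monomial d (1 : F)) : A F n) =
          -(X (Sum.inr j) * X (Sum.inr i) * monomial d (1 : F)) := rfl
      rw [e, mul_assoc]
      exact Ok_neg F n (Ok_X_mul F n (by simp) hyj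
        (Ok_X_mul F n (by simp) hyi (Ok_mono F n (by omega) hM)))
    · rw [if_neg h1, if_pos h2]
      have e : ((pdy F n j * pdy F n i) (monomial d (1 : F)) : A F n) =
          pderiv (Sum.inr j) (pderiv (Sum.inr i) (monomial d (1 : F))) := rfl
      rw [e]
      exact Ok_mono F n (by omega)
        (Ok_pderiv F n (by simp) hyj (Ok_pderiv F n (by simp) hyi hM))
    · rw [if_neg h1, if_neg h2]
      by_cases hij : j = i
      · rw [if_pos hij]
        have e : ((-(mul F n (yv F n i) * pdy F n j) - (1 : Module.End F (A F n)))
              (monomial d (1 : F)) : A F n) =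
            -(X (Sum.inr i) * pderiv (Sum.inr j) (monomial d (1 : F))) -
              monomial d (1 : F) := rfl
        rw [e]
        exact Ok_sub F n (Ok_neg F n (Ok_mono F n (by omega)
          (Ok_X_mul F n (by simp) hyi (Ok_pderiv F n (by simp) hyj hM))))
          (Ok_mono F n (by omega) hM)
      · rw [if_neg hij]
        have e : ((-(mul F n (yv F n i) * pdy F n j) - (0 : Module.End F (A F n)))
              (monomial d (1 : F)) : A F n) =
            -(X (Sum.inr i) * pderiv (Sum.inr j) (monomial d (1 : F))) - 0 := rfl
        rw [e, sub_zero]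
        exact Ok_neg F n (Ok_mono F n (by omega)
          (Ok_X_mul F n (by simp) hyi (Ok_pderiv F n (by simp) hyj hM)))
  rw [π, LinearMap.sub_apply]
  exact Ok_sub F n hOk1 hOk2



lemma mul_pow_apply (f : A F n) (i : ℕ) (z : A F n) :
    (mul F n f ^ i) z = f ^ i * z := by
  rw [show mul F n f = LinearMap.mulLeft F f from rfl, LinearMap.pow_mulLeft]
  rfl

lemma Tfun_eq_sum_subset (hn : n₁ < n) {p : A F n} {s : Finset ((Fin n ⊕ Fin n) →₀ ℕ)}
    (hs : p.support ⊆ s) :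
    Tfun F n n₁ n₂ hn p = ∑ d ∈ s, coeff d p • Tmono F n n₁ n₂ hn d :=
  Finset.sum_subset hs (fun d _ hd => by rw [notMem_support_iff.mp hd, zero_smul])

lemma Tfun_add (hn : n₁ < n) (p q : A F n) :
    Tfun F n n₁ n₂ hn (p + q) = Tfun F n n₁ n₂ hn p + Tfun F n n₁ n₂ hn q := by
  classical
  rw [Tfun_eq_sum_subset F n n₁ n₂ hn (support_add (p := p) (q := q)),
    Tfun_eq_sum_subset F n n₁ n₂ hn (Finset.subset_union_left (s₁ := p.support) (s₂ := q.support)),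
    Tfun_eq_sum_subset F n n₁ n₂ hn (Finset.subset_union_right (s₁ := p.support) (s₂ := q.support)),
    ← Finset.sum_add_distrib]
  exact Finset.sum_congr rfl fun d _ => by rw [coeff_add, add_smul]

lemma Tfun_smul (hn : n₁ < n) (c : F) (p : A F n) :
    Tfun F n n₁ n₂ hn (c • p) = c • Tfun F n n₁ n₂ hn p := by
  by_cases hc : c = 0
  · subst hc
    simp [Tfun]
  · rw [Tfun, Tfun, support_smul_eq hc, Finset.smul_sum]
    exact Finset.sum_congr rfl fun d _ => by
      rw [coeff_smul, smul_eq_mul, smul_smul]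

lemma Tfun_eq_of_Ok (hn : n₁ < n) (h₁₂ : n₁ < n₂) (N a b : ℕ) (q : A F n)
    (hq : Ok F n ⟨n₁, hn⟩ a b N q) :
    Tfun F n n₁ n₂ hn q = ∑ i ∈ Finset.range (N + 1),
      ((∏ r ∈ Finset.range i, ((a + r + 1) * (b + r + 1)) : ℕ) : F)⁻¹ •
        ((mul F n (xv F n ⟨n₁, hn⟩ * yv F n ⟨n₁, hn⟩) ^ i)
          (((lap F n n₁ n₂ + pdx F n ⟨n₁, hn⟩ * pdy F n ⟨n₁, hn⟩) ^ i) q)) := by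
  classical
  have hTm : ∀ d' ∈ q.support, Tmono F n n₁ n₂ hn d' =
      ∑ i ∈ Finset.range (N + 1),
        ((∏ r ∈ Finset.range i, ((a + r + 1) * (b + r + 1)) : ℕ) : F)⁻¹ •
          ((mul F n (xv F n ⟨n₁, hn⟩ * yv F n ⟨n₁, hn⟩) ^ i)
            (((lap F n n₁ n₂ + pdx F n ⟨n₁, hn⟩ * pdy F n ⟨n₁, hn⟩) ^ i)
              (monomial d' (1 : F)))) := by
    intro d' hd'
    obtain ⟨ha, hb, hN⟩ := hq d' hd'
    rw [Tmono, ha, hb]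
    have hdeg : (d'.sum fun _ e => e) + 1 ≤ N + 1 := by
      show deg n d' + 1 ≤ N + 1; omega
    rw [Finset.sum_subset (Finset.range_subset_range.mpr hdeg)]
    · exact Finset.sum_congr rfl fun i _ => by rw [mul_pow_apply]
    · intro i hiN hi
      rw [Finset.mem_range, not_lt] at hi
      replace hi : deg n d' + 1 ≤ i := hi
      have hsupp : ∀ e ∈ (monomial d' (1 : F)).support, wsum n n₂ e ≤ deg n d' := by
        intro e he
        rw [support_monomial, if_neg one_ne_zero, Finset.mem_singleton] at he
        subst he
        exact wsum_le_deg n n₂ _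
      rw [Lpow_zero_of_lt F n n₁ n₂ h₁₂ hn (deg n d') i (by omega) _ hsupp, mul_zero, smul_zero]
  have hq_as : q = ∑ d' ∈ q.support, coeff d' q • monomial d' (1 : F) := by
    conv_lhs => rw [as_sum q]
    exact Finset.sum_congr rfl fun d' _ => by rw [smul_monomial, smul_eq_mul, mul_one]
  rw [Tfun, Finset.sum_congr rfl (fun d' hd' => by rw [hTm d' hd', Finset.smul_sum]),
    Finset.sum_comm]
  apply Finset.sum_congr rfl
  intro i _
  conv_rhs => rw [hq_as, map_sum, map_sum, Finset.smul_sum]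
  apply Finset.sum_congr rfl
  intro d' _
  rw [map_smul, map_smul, smul_comm]



lemma lap_eq : lap F n n₁ n₂ =
    (∑ a ∈ Finset.univ.filter (fun a : Fin n => (a : ℕ) < n₁),
      Xm F n (Sum.inl a) * Dm F n (Sum.inr a))
    - (∑ r ∈ Finset.univ.filter (fun r : Fin n => n₁ ≤ (r : ℕ) ∧ (r : ℕ) < n₂),
      Dm F n (Sum.inl r) * Dm F n (Sum.inr r))
    + ∑ s ∈ Finset.univ.filter (fun s : Fin n => n₂ ≤ (s : ℕ)),
      Xm F n (Sum.inr s) * Dm F n (Sum.inl s) := rfl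

lemma XD_mul_X (a b u : Fin n ⊕ Fin n) :
    (Xm F n a * Dm F n b) * Xm F n u =
      Xm F n u * (Xm F n a * Dm F n b) + (if b = u then Xm F n a else 0) := by
  rw [mul_assoc, Dm_mul_Xm, mul_add, ← mul_assoc, (commute_Xm_Xm F n a u).eq, mul_assoc]
  by_cases h : b = u <;> simp [h]

lemma DD_mul_X (a b u : Fin n ⊕ Fin n) :
    (Dm F n a * Dm F n b) * Xm F n u =
      Xm F n u * (Dm F n a * Dm F n b)
        + ((if a = u then Dm F n b else 0) + (if b = u then Dm F n a else 0)) := by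
  rw [mul_assoc, Dm_mul_Xm, mul_add, ← mul_assoc, Dm_mul_Xm, add_mul]
  by_cases h1 : a = u <;> by_cases h2 : b = u <;> simp [h1, h2, mul_assoc] <;> abel

lemma XD_mul_D (a b u : Fin n ⊕ Fin n) :
    (Xm F n a * Dm F n b) * Dm F n u =
      Dm F n u * (Xm F n a * Dm F n b) - (if u = a then Dm F n b else 0) := by
  have h : Dm F n u * (Xm F n a * Dm F n b) =
      (Xm F n a * Dm F n b) * Dm F n u + (if u = a then Dm F n b else 0) := by
    rw [← mul_assoc, Dm_mul_Xm, add_mul, mul_assoc, (commute_Dm_Dm F n u b).eq, ← mul_assoc]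
    by_cases h : u = a <;> simp [h]
  rw [h]; abel

lemma DD_mul_D (a b u : Fin n ⊕ Fin n) :
    (Dm F n a * Dm F n b) * Dm F n u = Dm F n u * (Dm F n a * Dm F n b) := by
  rw [mul_assoc, (commute_Dm_Dm F n b u).eq, ← mul_assoc, (commute_Dm_Dm F n a u).eq, mul_assoc]

lemma sum_filter_ite (P : Fin n → Prop) [DecidablePred P] (t : Fin n)
    (f : Fin n → Module.End F (A F n)) :
    ∑ r ∈ Finset.univ.filter P, (if r = t then f r else 0) = if P t then f t else 0 := by
  rw [Finset.sum_ite_eq' (Finset.univ.filter P) t f]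
  simp

lemma lap_mul_Xm_inl (t : Fin n) :
    lap F n n₁ n₂ * Xm F n (Sum.inl t) = Xm F n (Sum.inl t) * lap F n n₁ n₂
      + ((if n₂ ≤ (t : ℕ) then Xm F n (Sum.inr t) else 0)
          - (if n₁ ≤ (t : ℕ) ∧ (t : ℕ) < n₂ then Dm F n (Sum.inr t) else 0)) := by
  rw [lap_eq, add_mul, sub_mul, Finset.sum_mul, Finset.sum_mul, Finset.sum_mul, mul_add, mul_sub,
    Finset.mul_sum, Finset.mul_sum, Finset.mul_sum,
    Finset.sum_congr rfl (fun a _ => XD_mul_X F n (Sum.inl a) (Sum.inr a) (Sum.inl t)),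
    Finset.sum_congr rfl (fun r _ => DD_mul_X F n (Sum.inl r) (Sum.inr r) (Sum.inl t)),
    Finset.sum_congr rfl (fun s _ => XD_mul_X F n (Sum.inr s) (Sum.inl s) (Sum.inl t))]
  simp only [Finset.sum_add_distrib, reduceCtorEq, if_false, Sum.inl.injEq, Sum.inr.injEq,
    Finset.sum_const_zero, add_zero]
  rw [sum_filter_ite F n _ t (fun r => Dm F n (Sum.inr r)),
    sum_filter_ite F n _ t (fun s => Xm F n (Sum.inr s))]
  abel

lemma lap_mul_Xm_inr (t : Fin n) :
    lap F n n₁ n₂ * Xm F n (Sum.inr t) = Xm F n (Sum.inr t) * lap F n n₁ n₂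
      + ((if (t : ℕ) < n₁ then Xm F n (Sum.inl t) else 0)
          - (if n₁ ≤ (t : ℕ) ∧ (t : ℕ) < n₂ then Dm F n (Sum.inl t) else 0)) := by
  rw [lap_eq, add_mul, sub_mul, Finset.sum_mul, Finset.sum_mul, Finset.sum_mul, mul_add, mul_sub,
    Finset.mul_sum, Finset.mul_sum, Finset.mul_sum,
    Finset.sum_congr rfl (fun a _ => XD_mul_X F n (Sum.inl a) (Sum.inr a) (Sum.inr t)),
    Finset.sum_congr rfl (fun r _ => DD_mul_X F n (Sum.inl r) (Sum.inr r) (Sum.inr t)),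
    Finset.sum_congr rfl (fun s _ => XD_mul_X F n (Sum.inr s) (Sum.inl s) (Sum.inr t))]
  simp only [Finset.sum_add_distrib, reduceCtorEq, if_false, Sum.inl.injEq, Sum.inr.injEq,
    Finset.sum_const_zero, add_zero, zero_add]
  rw [sum_filter_ite F n _ t (fun a => Xm F n (Sum.inl a)),
    sum_filter_ite F n _ t (fun r => Dm F n (Sum.inl r))]
  abel

lemma lap_mul_Dm_inl (t : Fin n) :
    lap F n n₁ n₂ * Dm F n (Sum.inl t) = Dm F n (Sum.inl t) * lap F n n₁ n₂
      + (0 - (if (t : ℕ) < n₁ then Dm F n (Sum.inr t) else 0)) := by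
  rw [lap_eq, add_mul, sub_mul, Finset.sum_mul, Finset.sum_mul, Finset.sum_mul, mul_add, mul_sub,
    Finset.mul_sum, Finset.mul_sum, Finset.mul_sum,
    Finset.sum_congr rfl (fun a _ => XD_mul_D F n (Sum.inl a) (Sum.inr a) (Sum.inl t)),
    Finset.sum_congr rfl (fun r _ => DD_mul_D F n (Sum.inl r) (Sum.inr r) (Sum.inl t)),
    Finset.sum_congr rfl (fun s _ => XD_mul_D F n (Sum.inr s) (Sum.inl s) (Sum.inl t))]
  simp only [Finset.sum_sub_distrib, reduceCtorEq, if_false, Sum.inl.injEq, Sum.inr.injEq,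
    Finset.sum_const_zero, sub_zero]
  rw [show (∑ a ∈ Finset.univ.filter (fun a : Fin n => (a : ℕ) < n₁),
        (if (t : Fin n) = a then Dm F n (Sum.inr a) else 0)) =
      ∑ a ∈ Finset.univ.filter (fun a : Fin n => (a : ℕ) < n₁),
        (if (a : Fin n) = t then Dm F n (Sum.inr a) else 0) from
      Finset.sum_congr rfl fun a _ => if_congr eq_comm rfl rfl,
    sum_filter_ite F n _ t (fun a => Dm F n (Sum.inr a))]
  abel

lemma lap_mul_Dm_inr (t : Fin n) :
    lap F n n₁ n₂ * Dm F n (Sum.inr t) = Dm F n (Sum.inr t) * lap F n n₁ n₂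
      + (0 - (if n₂ ≤ (t : ℕ) then Dm F n (Sum.inl t) else 0)) := by
  rw [lap_eq, add_mul, sub_mul, Finset.sum_mul, Finset.sum_mul, Finset.sum_mul, mul_add, mul_sub,
    Finset.mul_sum, Finset.mul_sum, Finset.mul_sum,
    Finset.sum_congr rfl (fun a _ => XD_mul_D F n (Sum.inl a) (Sum.inr a) (Sum.inr t)),
    Finset.sum_congr rfl (fun r _ => DD_mul_D F n (Sum.inl r) (Sum.inr r) (Sum.inr t)),
    Finset.sum_congr rfl (fun s _ => XD_mul_D F n (Sum.inr s) (Sum.inl s) (Sum.inr t))]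
  simp only [Finset.sum_sub_distrib, reduceCtorEq, if_false, Sum.inl.injEq, Sum.inr.injEq,
    Finset.sum_const_zero, sub_zero]
  rw [show (∑ s ∈ Finset.univ.filter (fun s : Fin n => n₂ ≤ (s : ℕ)),
        (if (t : Fin n) = s then Dm F n (Sum.inl s) else 0)) =
      ∑ s ∈ Finset.univ.filter (fun s : Fin n => n₂ ≤ (s : ℕ)),
        (if (s : Fin n) = t then Dm F n (Sum.inl s) else 0) from
      Finset.sum_congr rfl fun s _ => if_congr eq_comm rfl rfl,
    sum_filter_ite F n _ t (fun s => Dm F n (Sum.inl s))]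
  abel



lemma lap_comm_mul {L Aop Bop A' B' : Module.End F (A F n)}
    (hA : L * Aop = Aop * L + A') (hB : L * Bop = Bop * L + B') :
    L * (Aop * Bop) = (Aop * Bop) * L + (A' * Bop + Aop * B') := by
  rw [← mul_assoc, hA, add_mul, mul_assoc, hB, mul_add, ← mul_assoc]
  abel

lemma comm_of_corr2 {L E1 E2 C1 C2 : Module.End F (A F n)}
    (h1 : L * E1 = E1 * L + C1) (h2 : L * E2 = E2 * L + C2) (hC : C1 = C2) :
    (E1 - E2) * L = L * (E1 - E2) := by
  rw [mul_sub, sub_mul, h1, h2, hC]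
  abel

lemma Emul_neg (a b : Module.End F (A F n)) : a * -b = -(a * b) :=
  LinearMap.ext fun p => by simp [Module.End.mul_apply]

lemma Eneg_mul (a b : Module.End F (A F n)) : -a * b = -(a * b) :=
  LinearMap.ext fun _ => rfl

lemma Emul_zero (a : Module.End F (A F n)) : a * 0 = 0 :=
  LinearMap.ext fun p => by simp [Module.End.mul_apply]

lemma Ezero_mul (a : Module.End F (A F n)) : 0 * a = 0 :=
  LinearMap.ext fun _ => rfl

lemma Ezero_sub (a : Module.End F (A F n)) : 0 - a = -a := by abel

lemma Esub_zero (a : Module.End F (A F n)) : a - 0 = a := by abel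

lemma Esub_self (a : Module.End F (A F n)) : a - a = 0 := by abel

lemma Eneg_neg (a : Module.End F (A F n)) : -(-a) = a := by abel

lemma Eadd_zero (a : Module.End F (A F n)) : a + 0 = a := by abel

lemma Ezero_add (a : Module.End F (A F n)) : 0 + a = a := by abel

lemma corr_neg {L P C : Module.End F (A F n)} (h : L * P = P * L + C) :
    L * (-P) = (-P) * L + (-C) := by
  rw [Emul_neg, h, Eneg_mul]
  abel

lemma corr_neg_sub_delta {L P C δ : Module.End F (A F n)}
    (h : L * P = P * L + C) (hδ : L * δ = δ * L) :
    L * (-P - δ) = (-P - δ) * L + (-C) := by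
  have e1 : L * (-P - δ) = -(L * P) - L * δ :=
    LinearMap.ext fun p => by simp [Module.End.mul_apply]
  have e2 : (-P - δ) * L = -(P * L) - δ * L :=
    LinearMap.ext fun _ => rfl
  rw [e1, e2, h, hδ]
  abel

lemma mul_xv_eq (t : Fin n) : mul F n (xv F n t) = Xm F n (Sum.inl t) := rfl
lemma mul_yv_eq (t : Fin n) : mul F n (yv F n t) = Xm F n (Sum.inr t) := rfl
lemma pdx_eq (t : Fin n) : pdx F n t = Dm F n (Sum.inl t) := rfl
lemma pdy_eq (t : Fin n) : pdy F n t = Dm F n (Sum.inr t) := rfl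

lemma mul_xx_eq (i j : Fin n) :
    mul F n (xv F n i * xv F n j) = Xm F n (Sum.inl i) * Xm F n (Sum.inl j) := by
  apply LinearMap.ext; intro p
  simp [mul, Xm, xv, Module.End.mul_apply, mul_assoc]

lemma mul_yy_eq (i j : Fin n) :
    mul F n (yv F n i * yv F n j) = Xm F n (Sum.inr i) * Xm F n (Sum.inr j) := by
  apply LinearMap.ext; intro p
  simp [mul, Xm, yv, Module.End.mul_apply, mul_assoc]

lemma mul_xy_eq (i j : Fin n) :
    mul F n (xv F n i * yv F n j) = Xm F n (Sum.inl i) * Xm F n (Sum.inr j) := by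
  apply LinearMap.ext; intro p
  simp [mul, Xm, xv, yv, Module.End.mul_apply, mul_assoc]

lemma pi_mul_lap (h₁₂ : n₁ < n₂) (i j : Fin n) :
    π F n n₁ n₂ i j * lap F n n₁ n₂ = lap F n n₁ n₂ * π F n n₁ n₂ i j := by
  have hδ : ∀ c : Prop, ∀ inst : Decidable c,
      lap F n n₁ n₂ * (if c then (1 : Module.End F (A F n)) else 0) =
        (if c then (1 : Module.End F (A F n)) else 0) * lap F n n₁ n₂ := by
    intro c inst; split_ifs <;> simp
  rcases (by omega : (i : ℕ) < n₁ ∨ (n₁ ≤ (i : ℕ) ∧ (i : ℕ) < n₂) ∨ n₂ ≤ (i : ℕ)) with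
    hiL | hiM | hiH <;>
  rcases (by omega : (j : ℕ) < n₁ ∨ (n₁ ≤ (j : ℕ) ∧ (j : ℕ) < n₂) ∨ n₂ ≤ (j : ℕ)) with
    hjL | hjM | hjH
  -- case (L, L)
  · rw [π, Ex, Ey, if_pos hiL, if_pos hjL, if_pos (show (j : ℕ) < n₂ by omega),
      if_pos (show (i : ℕ) < n₂ by omega)]
    simp only [mul_xv_eq, mul_yv_eq, pdx_eq, pdy_eq, mul_xx_eq, mul_yy_eq]
    refine comm_of_corr2 F n
      (corr_neg_sub_delta F n (lap_comm_mul F n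
        (by rw [lap_mul_Xm_inl F n n₁ n₂ j, if_neg (by omega), if_neg (by omega)])
        (by rw [lap_mul_Dm_inl F n n₁ n₂ i, if_pos (by omega)])) (hδ _ _))
      (lap_comm_mul F n
        (by rw [lap_mul_Xm_inr F n n₁ n₂ j, if_pos (by omega), if_neg (by omega)])
        (by rw [lap_mul_Dm_inr F n n₁ n₂ i, if_neg (by omega)]))
      ?_
    simp only [Esub_self, Ezero_sub, Esub_zero, Emul_neg, Eneg_mul, Emul_zero, Ezero_mul, Eneg_neg, Eadd_zero, Ezero_add]
  -- case (L, M)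
  · rw [π, Ex, Ey, if_pos hiL, if_neg (show ¬ (j : ℕ) < n₁ by omega),
      if_pos (show (j : ℕ) < n₂ by omega), if_pos (show (i : ℕ) < n₂ by omega)]
    simp only [mul_xv_eq, mul_yv_eq, pdx_eq, pdy_eq, mul_xx_eq, mul_yy_eq]
    refine comm_of_corr2 F n
      (lap_comm_mul F n
        (by rw [lap_mul_Dm_inl F n n₁ n₂ i, if_pos (by omega)])
        (by rw [lap_mul_Dm_inl F n n₁ n₂ j, if_neg (by omega)]))
      (lap_comm_mul F n
        (by rw [lap_mul_Xm_inr F n n₁ n₂ j, if_neg (by omega), if_pos (by omega)])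
        (by rw [lap_mul_Dm_inr F n n₁ n₂ i, if_neg (by omega)]))
      ?_
    simp only [Esub_self, Ezero_sub, Esub_zero, Emul_neg, Eneg_mul, Emul_zero, Ezero_mul, Eneg_neg, Eadd_zero, Ezero_add]
    rw [(commute_Dm_Dm F n (Sum.inr i) (Sum.inl j)).eq]
  -- case (L, H)
  · rw [π, Ex, Ey, if_pos hiL, if_neg (show ¬ (j : ℕ) < n₁ by omega),
      if_neg (show ¬ (j : ℕ) < n₂ by omega), if_pos (show (i : ℕ) < n₂ by omega)]
    simp only [mul_xv_eq, mul_yv_eq, pdx_eq, pdy_eq, mul_xx_eq, mul_yy_eq]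
    refine comm_of_corr2 F n
      (lap_comm_mul F n
        (by rw [lap_mul_Dm_inl F n n₁ n₂ i, if_pos (by omega)])
        (by rw [lap_mul_Dm_inl F n n₁ n₂ j, if_neg (by omega)]))
      (lap_comm_mul F n
        (by rw [lap_mul_Dm_inr F n n₁ n₂ j, if_pos (by omega)])
        (by rw [lap_mul_Dm_inr F n n₁ n₂ i, if_neg (by omega)]))
      ?_
    simp only [Esub_self, Ezero_sub, Esub_zero, Emul_neg, Eneg_mul, Emul_zero, Ezero_mul, Eneg_neg, Eadd_zero, Ezero_add]
    rw [(commute_Dm_Dm F n (Sum.inr i) (Sum.inl j)).eq]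
  -- case (M, L)
  · rw [π, Ex, Ey, if_neg (show ¬ (i : ℕ) < n₁ by omega), if_pos hjL,
      if_pos (show (j : ℕ) < n₂ by omega), if_pos (show (i : ℕ) < n₂ by omega)]
    simp only [mul_xv_eq, mul_yv_eq, pdx_eq, pdy_eq, mul_xx_eq, mul_yy_eq]
    refine comm_of_corr2 F n
      (corr_neg F n (lap_comm_mul F n
        (by rw [lap_mul_Xm_inl F n n₁ n₂ i, if_neg (by omega), if_pos (by omega)])
        (by rw [lap_mul_Xm_inl F n n₁ n₂ j, if_neg (by omega), if_neg (by omega)])))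
      (lap_comm_mul F n
        (by rw [lap_mul_Xm_inr F n n₁ n₂ j, if_pos (by omega), if_neg (by omega)])
        (by rw [lap_mul_Dm_inr F n n₁ n₂ i, if_neg (by omega)]))
      ?_
    simp only [Esub_self, Ezero_sub, Esub_zero, Emul_neg, Eneg_mul, Emul_zero, Ezero_mul, Eneg_neg, Eadd_zero, Ezero_add]
    rw [(commute_Dm_Xm F n (show (Sum.inr i : Fin n ⊕ Fin n) ≠ Sum.inl j by simp)).eq]
  -- case (M, M)
  · rw [π, Ex, Ey, if_neg (show ¬ (i : ℕ) < n₁ by omega),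
      if_neg (show ¬ (j : ℕ) < n₁ by omega),
      if_pos (show (j : ℕ) < n₂ by omega), if_pos (show (i : ℕ) < n₂ by omega)]
    simp only [mul_xv_eq, mul_yv_eq, pdx_eq, pdy_eq, mul_xx_eq, mul_yy_eq]
    refine comm_of_corr2 F n
      (lap_comm_mul F n
        (by rw [lap_mul_Xm_inl F n n₁ n₂ i, if_neg (by omega), if_pos (by omega)])
        (by rw [lap_mul_Dm_inl F n n₁ n₂ j, if_neg (by omega)]))
      (lap_comm_mul F n
        (by rw [lap_mul_Xm_inr F n n₁ n₂ j, if_neg (by omega), if_pos (by omega)])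
        (by rw [lap_mul_Dm_inr F n n₁ n₂ i, if_neg (by omega)]))
      ?_
    simp only [Esub_self, Ezero_sub, Esub_zero, Emul_neg, Eneg_mul, Emul_zero, Ezero_mul, Eneg_neg, Eadd_zero, Ezero_add]
    rw [(commute_Dm_Dm F n (Sum.inr i) (Sum.inl j)).eq]
  -- case (M, H)
  · rw [π, Ex, Ey, if_neg (show ¬ (i : ℕ) < n₁ by omega),
      if_neg (show ¬ (j : ℕ) < n₁ by omega),
      if_neg (show ¬ (j : ℕ) < n₂ by omega), if_pos (show (i : ℕ) < n₂ by omega)]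
    simp only [mul_xv_eq, mul_yv_eq, pdx_eq, pdy_eq, mul_xx_eq, mul_yy_eq]
    refine comm_of_corr2 F n
      (lap_comm_mul F n
        (by rw [lap_mul_Xm_inl F n n₁ n₂ i, if_neg (by omega), if_pos (by omega)])
        (by rw [lap_mul_Dm_inl F n n₁ n₂ j, if_neg (by omega)]))
      (lap_comm_mul F n
        (by rw [lap_mul_Dm_inr F n n₁ n₂ j, if_pos (by omega)])
        (by rw [lap_mul_Dm_inr F n n₁ n₂ i, if_neg (by omega)]))
      ?_
    simp only [Esub_self, Ezero_sub, Esub_zero, Emul_neg, Eneg_mul, Emul_zero, Ezero_mul, Eneg_neg, Eadd_zero, Ezero_add]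
    rw [(commute_Dm_Dm F n (Sum.inr i) (Sum.inl j)).eq]
  -- case (H, L)
  · rw [π, Ex, Ey, if_neg (show ¬ (i : ℕ) < n₁ by omega), if_pos hjL,
      if_pos (show (j : ℕ) < n₂ by omega), if_neg (show ¬ (i : ℕ) < n₂ by omega)]
    simp only [mul_xv_eq, mul_yv_eq, pdx_eq, pdy_eq, mul_xx_eq, mul_yy_eq]
    refine comm_of_corr2 F n
      (corr_neg F n (lap_comm_mul F n
        (by rw [lap_mul_Xm_inl F n n₁ n₂ i, if_pos (by omega), if_neg (by omega)])
        (by rw [lap_mul_Xm_inl F n n₁ n₂ j, if_neg (by omega), if_neg (by omega)])))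
      (corr_neg F n (lap_comm_mul F n
        (by rw [lap_mul_Xm_inr F n n₁ n₂ j, if_pos (by omega), if_neg (by omega)])
        (by rw [lap_mul_Xm_inr F n n₁ n₂ i, if_neg (by omega), if_neg (by omega)])))
      ?_
    simp only [Esub_self, Ezero_sub, Esub_zero, Emul_neg, Eneg_mul, Emul_zero, Ezero_mul, Eneg_neg, Eadd_zero, Ezero_add]
    rw [(commute_Xm_Xm F n (Sum.inr i) (Sum.inl j)).eq]
  -- case (H, M)
  · rw [π, Ex, Ey, if_neg (show ¬ (i : ℕ) < n₁ by omega),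
      if_neg (show ¬ (j : ℕ) < n₁ by omega),
      if_pos (show (j : ℕ) < n₂ by omega), if_neg (show ¬ (i : ℕ) < n₂ by omega)]
    simp only [mul_xv_eq, mul_yv_eq, pdx_eq, pdy_eq, mul_xx_eq, mul_yy_eq]
    refine comm_of_corr2 F n
      (lap_comm_mul F n
        (by rw [lap_mul_Xm_inl F n n₁ n₂ i, if_pos (by omega), if_neg (by omega)])
        (by rw [lap_mul_Dm_inl F n n₁ n₂ j, if_neg (by omega)]))
      (corr_neg F n (lap_comm_mul F n
        (by rw [lap_mul_Xm_inr F n n₁ n₂ j, if_neg (by omega), if_pos (by omega)])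
        (by rw [lap_mul_Xm_inr F n n₁ n₂ i, if_neg (by omega), if_neg (by omega)])))
      ?_
    simp only [Esub_self, Ezero_sub, Esub_zero, Emul_neg, Eneg_mul, Emul_zero, Ezero_mul, Eneg_neg, Eadd_zero, Ezero_add]
    rw [(commute_Dm_Xm F n (show (Sum.inl j : Fin n ⊕ Fin n) ≠ Sum.inr i by simp)).eq]
  -- case (H, H)
  · rw [π, Ex, Ey, if_neg (show ¬ (i : ℕ) < n₁ by omega),
      if_neg (show ¬ (j : ℕ) < n₁ by omega),
      if_neg (show ¬ (j : ℕ) < n₂ by omega), if_neg (show ¬ (i : ℕ) < n₂ by omega)]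
    simp only [mul_xv_eq, mul_yv_eq, pdx_eq, pdy_eq, mul_xx_eq, mul_yy_eq]
    refine comm_of_corr2 F n
      (lap_comm_mul F n
        (by rw [lap_mul_Xm_inl F n n₁ n₂ i, if_pos (by omega), if_neg (by omega)])
        (by rw [lap_mul_Dm_inl F n n₁ n₂ j, if_neg (by omega)]))
      (corr_neg_sub_delta F n (lap_comm_mul F n
        (by rw [lap_mul_Xm_inr F n n₁ n₂ i, if_neg (by omega), if_neg (by omega)])
        (by rw [lap_mul_Dm_inr F n n₁ n₂ j, if_pos (by omega)])) (hδ _ _))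
      ?_
    simp only [Esub_self, Ezero_sub, Esub_zero, Emul_neg, Eneg_mul, Emul_zero, Ezero_mul, Eneg_neg, Eadd_zero, Ezero_add]


lemma key_commutes (t k : Fin n) (ht : t ≠ k) (E : Module.End F (A F n))
    (hE : E = Xm F n (Sum.inl k) ∨ E = Xm F n (Sum.inr k) ∨
      E = Dm F n (Sum.inl k) ∨ E = Dm F n (Sum.inr k)) :
    Commute (Xm F n (Sum.inl t)) E ∧ Commute (Xm F n (Sum.inr t)) E ∧
      Commute (Dm F n (Sum.inl t)) E ∧ Commute (Dm F n (Sum.inr t)) E := by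
  have h1 : (Sum.inl t : Fin n ⊕ Fin n) ≠ Sum.inl k := by simp [ht]
  have h2 : (Sum.inr t : Fin n ⊕ Fin n) ≠ Sum.inr k := by simp [ht]
  have h3 : (Sum.inl k : Fin n ⊕ Fin n) ≠ Sum.inl t := by simp [Ne.symm ht]
  have h4 : (Sum.inr k : Fin n ⊕ Fin n) ≠ Sum.inr t := by simp [Ne.symm ht]
  rcases hE with rfl | rfl | rfl | rfl
  · exact ⟨commute_Xm_Xm F n _ _, commute_Xm_Xm F n _ _,
      commute_Dm_Xm F n h1, commute_Dm_Xm F n (by simp)⟩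
  · exact ⟨commute_Xm_Xm F n _ _, commute_Xm_Xm F n _ _,
      commute_Dm_Xm F n (by simp), commute_Dm_Xm F n h2⟩
  · exact ⟨(commute_Dm_Xm F n h3).symm, (commute_Dm_Xm F n (by simp)).symm,
      commute_Dm_Dm F n _ _, commute_Dm_Dm F n _ _⟩
  · exact ⟨(commute_Dm_Xm F n (by simp)).symm, (commute_Dm_Xm F n h4).symm,
      commute_Dm_Dm F n _ _, commute_Dm_Dm F n _ _⟩

lemma pi_commute_gen (i j k : Fin n) (hik : i ≠ k) (hjk : j ≠ k)
    (E : Module.End F (A F n))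
    (hE : E = Xm F n (Sum.inl k) ∨ E = Xm F n (Sum.inr k) ∨
      E = Dm F n (Sum.inl k) ∨ E = Dm F n (Sum.inr k)) :
    Commute (π F n n₁ n₂ i j) E := by
  obtain ⟨ci1, ci2, ci3, ci4⟩ := key_commutes F n i k hik E hE
  obtain ⟨cj1, cj2, cj3, cj4⟩ := key_commutes F n j k hjk E hE
  rw [π]
  apply Commute.sub_left
  · rw [Ex]
    split_ifs
    · exact Commute.sub_left ((cj1.mul_left ci3).neg_left) (Commute.one_left E)
    · exact Commute.sub_left ((cj1.mul_left ci3).neg_left) (Commute.zero_left E)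
    · exact ci3.mul_left cj3
    · rw [mul_xx_eq]
      exact (ci1.mul_left cj1).neg_left
    · exact ci1.mul_left cj3
  · rw [Ey]
    split_ifs
    · exact cj2.mul_left ci4
    · rw [mul_yy_eq]
      exact (cj2.mul_left ci2).neg_left
    · exact cj4.mul_left ci4
    · exact Commute.sub_left ((ci2.mul_left cj4).neg_left) (Commute.one_left E)
    · exact Commute.sub_left ((ci2.mul_left cj4).neg_left) (Commute.zero_left E)


/-- `T` commutes with `π(E_{i,j})` whenever `i, j ≠ n₁+1`
(0-based: `(i : ℕ) ≠ n₁`). -/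
theorem T_commutes_with_pi (h₁ : 1 ≤ n₁) (h₁₂ : n₁ < n₂) (h₂ : n₂ ≤ n) (hn : n₁ < n)
    (i j : Fin n) (hi : (i : ℕ) ≠ n₁) (hj : (j : ℕ) ≠ n₁) (p : A F n) :
    Tfun F n n₁ n₂ hn (π F n n₁ n₂ i j p) = π F n n₁ n₂ i j (Tfun F n n₁ n₂ hn p) := by
  induction p using MvPolynomial.induction_on' with
  | add p q hp hq =>
    rw [map_add, Tfun_add F n n₁ n₂ hn, hp, hq, Tfun_add F n n₁ n₂ hn, map_add]
  | monomial d a =>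
    have hm : (monomial d a : A F n) = a • monomial d (1 : F) := by
      rw [smul_monomial, smul_eq_mul, mul_one]
    rw [hm, map_smul, Tfun_smul F n n₁ n₂ hn, Tfun_smul F n n₁ n₂ hn, map_smul]
    congr 1
    set k : Fin n := ⟨n₁, hn⟩ with hk
    have hik : i ≠ k := fun h => hi (by rw [h])
    have hjk : j ≠ k := fun h => hj (by rw [h])
    have hOkpi := Ok_pi F n n₁ n₂ hn i j hi hj d
    have hOkm : Ok F n k (d (Sum.inl k)) (d (Sum.inr k)) (deg n d + 2)
        (monomial d (1 : F)) := Ok_mono F n (by omega) (Ok_monomial F n k d)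
    rw [Tfun_eq_of_Ok F n n₁ n₂ hn h₁₂ (deg n d + 2) _ _ _ hOkpi,
      Tfun_eq_of_Ok F n n₁ n₂ hn h₁₂ (deg n d + 2) _ _ _ hOkm, map_sum]
    apply Finset.sum_congr rfl
    intro m _
    rw [map_smul]
    congr 1
    have cM : Commute (π F n n₁ n₂ i j) (mul F n (xv F n k * yv F n k)) := by
      rw [mul_xy_eq]
      exact Commute.mul_right
        (pi_commute_gen F n n₁ n₂ i j k hik hjk _ (Or.inl rfl))
        (pi_commute_gen F n n₁ n₂ i j k hik hjk _ (Or.inr (Or.inl rfl)))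
    have cL : Commute (π F n n₁ n₂ i j) (lap F n n₁ n₂ + pdx F n k * pdy F n k) := by
      refine Commute.add_right (pi_mul_lap F n n₁ n₂ h₁₂ i j) ?_
      exact Commute.mul_right
        (pi_commute_gen F n n₁ n₂ i j k hik hjk _ (Or.inr (Or.inr (Or.inl rfl))))
        (pi_commute_gen F n n₁ n₂ i j k hik hjk _ (Or.inr (Or.inr (Or.inr rfl))))
    have e := Commute.mul_right (cM.pow_right m) (cL.pow_right m)
    have e2 := LinearMap.congr_fun e.eq (monomial d (1 : F))
    simp only [Module.End.mul_apply] at e2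
    exact e2.symm


end Stmt6
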